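/- Let N ∈ ℕ, r ∈ ℝ, T > 0, σ : Fin N → ℝ, S_{·,0} : Fin N → ℝ with S_{i,0} > 0 for all i, and let D be a symmetric positive-definite N×N real matrix with unit diagonal (D_{ii} = 1 for all i). Let μ_D be the probability measure on ℝ^N with density x ↦ ((2π)^N·det D)^(−1/2)·exp(−⟨x, D⁻¹x⟩/2) with respect to Lebesgue measure, and define the N-dimensional lognormal price S_i(x) = S_{i,0}·exp((r − σ_i²/2)·T + σ_i·√T·x_i). Then for every m ∈ Fin N and every measurable g : (Fin N → ℝ) → ℝ that is nonnegative or such that both sides are integrable, ∫ S_m(x)·g(S(x)) dμ_D(x) = S_{m,0}·exp(r·T)·∫ g( i ↦ ξ_{mi}·S_i(x) ) dμ_D(x), where ξ_{mi} = exp(σ_i·σ_m·D_{im}·T). (Girsanov-type transform for linear derivatives on N correlated lognormal assets.) -/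

import Mathlib

open MeasureTheory ProbabilityTheory

/-- The centered Gaussian measure on `ℝ^N` with covariance (correlation) matrix `D`,
given by the density `x ↦ ((2π)^N · det D)^(−1/2) · exp(−⟨x, D⁻¹x⟩/2)` w.r.t.
Lebesgue measure. -/
noncomputable def gaussD {N : ℕ} (D : Matrix (Fin N) (Fin N) ℝ) : Measure (Fin N → ℝ) :=
  (volume : Measure (Fin N → ℝ)).withDensity fun x =>
    ENNReal.ofReal ((((2 * Real.pi) ^ N * D.det) ^ (-(1 : ℝ) / 2)) *
      Real.exp (-(dotProduct x (Matrix.mulVec D⁻¹ x)) / 2))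

theorem multidim_girsanov_transform
    (N : ℕ) (r T : ℝ) (hT : 0 < T)
    (σ : Fin N → ℝ) (S₀ : Fin N → ℝ) (hS₀ : ∀ i, 0 < S₀ i)
    (D : Matrix (Fin N) (Fin N) ℝ) (hD : D.PosDef) (hDdiag : ∀ i, D i i = 1)
    (S : Fin N → (Fin N → ℝ) → ℝ)
    (hS : ∀ i x, S i x =
      S₀ i * Real.exp ((r - (σ i) ^ 2 / 2) * T + σ i * Real.sqrt T * x i))
    (ξ : Fin N → Fin N → ℝ)
    (hξ : ∀ m i, ξ m i = Real.exp (σ i * σ m * D i m * T))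
    (m : Fin N)
    (g : (Fin N → ℝ) → ℝ) (hg : Measurable g)
    (hgi : (∀ s, 0 ≤ g s) ∨
      (Integrable (fun x => S m x * g (fun i => S i x)) (gaussD D) ∧
        Integrable (fun x => g (fun i => ξ m i * S i x)) (gaussD D))) :
    ∫ x, S m x * g (fun i => S i x) ∂(gaussD D) =
      S₀ m * Real.exp (r * T) * ∫ x, g (fun i => ξ m i * S i x) ∂(gaussD D) := by
  clear hgi hg
  have hTT : Real.sqrt T * Real.sqrt T = T := Real.mul_self_sqrt hT.le
  -- the normalizing constant
  set C : ℝ := ((2 * Real.pi) ^ N * D.det) ^ (-(1 : ℝ) / 2) with hC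
  have hCpos : 0 < C := by
    apply Real.rpow_pos_of_pos
    have h1 : (0:ℝ) < (2 * Real.pi) ^ N := by positivity
    exact mul_pos h1 hD.det_pos
  -- the density as an ℝ≥0-valued function
  set f : (Fin N → ℝ) → NNReal := fun x =>
    (C * Real.exp (-(dotProduct x (Matrix.mulVec D⁻¹ x)) / 2)).toNNReal with hf
  have hfmeas : Measurable f := by
    apply Measurable.real_toNNReal
    apply Measurable.const_mul
    apply Measurable.exp
    apply Measurable.div_const
    apply Measurable.neg
    simp only [dotProduct, Matrix.mulVec]
    fun_prop
  have hfnn : ∀ x, ((f x : NNReal) : ℝ)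
      = C * Real.exp (-(dotProduct x (Matrix.mulVec D⁻¹ x)) / 2) := fun x =>
    Real.coe_toNNReal _ (le_of_lt (mul_pos hCpos (Real.exp_pos _)))
  have hgauss : gaussD D = (volume : Measure (Fin N → ℝ)).withDensity
      fun x => ((f x : NNReal) : ENNReal) := rfl
  -- the shift vector
  set v : Fin N → ℝ := fun i => σ m * Real.sqrt T * D i m with hv
  -- matrix facts
  have hdet : IsUnit D.det := isUnit_iff_ne_zero.mpr hD.det_pos.ne'
  have hDinvD : D⁻¹ * D = 1 := Matrix.nonsing_inv_mul D hdet
  have hsymD : Matrix.transpose D = D := by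
    ext i j
    have := congrFun (congrFun hD.1 i) j
    simpa [Matrix.conjTranspose_apply] using this
  have hiv : Matrix.mulVec D⁻¹ v = fun i =>
      σ m * Real.sqrt T * (1 : Matrix (Fin N) (Fin N) ℝ) i m := by
    funext i
    simp only [Matrix.mulVec, dotProduct, hv, ← hDinvD, Matrix.mul_apply,
      Finset.mul_sum]
    exact Finset.sum_congr rfl fun j _ => by ring
  have hyv : ∀ y : Fin N → ℝ, dotProduct y (Matrix.mulVec D⁻¹ v)
      = σ m * Real.sqrt T * y m := by
    intro y
    rw [hiv]
    simp [dotProduct, Matrix.one_apply, mul_ite, Finset.sum_ite_eq]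
    ring
  have hvv : dotProduct v (Matrix.mulVec D⁻¹ v)
      = (σ m * Real.sqrt T) ^ 2 := by
    rw [hyv v]
    simp only [hv, hDdiag m]
    ring
  have hvy : ∀ y : Fin N → ℝ, dotProduct v (Matrix.mulVec D⁻¹ y)
      = σ m * Real.sqrt T * y m := by
    intro y
    rw [Matrix.dotProduct_mulVec]
    have h1 : Matrix.vecMul v D⁻¹ = Matrix.mulVec D⁻¹ v := by
      have h2 : Matrix.transpose D⁻¹ = D⁻¹ := by
        rw [Matrix.transpose_nonsing_inv, hsymD]
      conv_lhs => rw [← h2, Matrix.vecMul_transpose]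
    rw [h1, hiv]
    simp [dotProduct, Matrix.one_apply, ite_mul, Finset.sum_ite_eq]
  have hQ : ∀ y : Fin N → ℝ,
      dotProduct (y + v) (Matrix.mulVec D⁻¹ (y + v))
        = dotProduct y (Matrix.mulVec D⁻¹ y)
          + 2 * σ m * Real.sqrt T * y m + (σ m * Real.sqrt T) ^ 2 := by
    intro y
    rw [Matrix.mulVec_add, add_dotProduct, dotProduct_add,
      dotProduct_add, hyv y, hvv, hvy y]
    ring
  -- rewrite the integrals
  rw [hgauss, integral_withDensity_eq_integral_smul hfmeas,
    integral_withDensity_eq_integral_smul hfmeas,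
    ← integral_add_right_eq_self (μ := volume)
      (fun x => f x • (S m x * g fun i => S i x)) v,
    ← integral_const_mul]
  refine integral_congr_ae (Filter.Eventually.of_forall fun y => ?_)
  -- pointwise identity
  have harg : (fun i => S i (y + v)) = fun i => ξ m i * S i y := by
    funext i
    rw [hS, hS, hξ, Pi.add_apply, mul_left_comm, ← Real.exp_add]
    congr 1
    rw [Real.exp_eq_exp]
    simp only [hv]
    linear_combination (σ i * σ m * D i m) * hTT
  simp only [NNReal.smul_def, smul_eq_mul, hfnn, harg, hQ y, hS m (y + v), Pi.add_apply]
  simp only [hv, hDdiag m, mul_one]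
  have key : Real.exp (-(dotProduct y (Matrix.mulVec D⁻¹ y)
        + 2 * σ m * Real.sqrt T * y m + (σ m * Real.sqrt T) ^ 2) / 2)
      * Real.exp ((r - σ m ^ 2 / 2) * T + σ m * Real.sqrt T * (y m + σ m * Real.sqrt T))
      = Real.exp (r * T)
        * Real.exp (-(dotProduct y (Matrix.mulVec D⁻¹ y)) / 2) := by
    rw [← Real.exp_add, ← Real.exp_add]
    congr 1
    linear_combination (σ m ^ 2 / 2) * hTT
  linear_combination (C * S₀ m * g fun i => ξ m i * S i y) * key
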